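/- arXiv:2101.04106 — 2 statements merged into one kernel-verified Lean document; each statement's English description precedes it below -/
import Mathlib

section
/- Let Y be a metric space. For each k ∈ ℕ, let h_k : Y → Y be a homeomorphism, and let V_k ⊆ Y be a set such that h_k is the identity on the complement of V_k. Define H_n = h_n ∘ h_{n-1} ∘ ⋯ ∘ h_1. Suppose (1) diam(⋃_{k ≥ n} V_k) → 0 as n → ∞, (2) there exists a compact set A ⊆ Y with ⋃_{k ≥ 1} V_k ⊆ interior(A), and (3) the pointwise limit H_∞ = lim_{n→∞} H_n exists and is a bijection of Y. Then H_∞ is a homeomorphism of Y. -/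
open Filter Topology

/-- The composite `h (n-1) ∘ ⋯ ∘ h 1 ∘ h 0` of the first `n` maps of a sequence. -/
def iterComp {Y : Type*} (h : ℕ → Y → Y) : ℕ → Y → Y
  | 0 => id
  | n + 1 => h n ∘ iterComp h n

/-- If each `h k` is a homeomorphism of a metric space `Y` which is the identity outside
`V k`, the diameters of the tails `⋃_{k ≥ n} V k` tend to `0`, all the `V k` are contained
in the interior of a compact set, and the pointwise limit of the compositions exists and is
a bijection, then that limit is a homeomorphism. -/
theorem stmt_3 {Y : Type*} [MetricSpace Y]
    (h : ℕ → Y → Y) (hh : ∀ k, IsHomeomorph (h k))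
    (V : ℕ → Set Y) (hid : ∀ k, ∀ y ∉ V k, h k y = y)
    (hdiam : Tendsto (fun n => EMetric.diam (⋃ k ≥ n, V k)) atTop (𝓝 0))
    (A : Set Y) (hA : IsCompact A) (hVA : (⋃ k, V k) ⊆ interior A)
    (Hinf : Y → Y) (hlim : ∀ y, Tendsto (fun n => iterComp h n y) atTop (𝓝 (Hinf y)))
    (hbij : Function.Bijective Hinf) :
    IsHomeomorph Hinf := by
  -- notation for tails
  set T : ℕ → Set Y := fun N => ⋃ k ≥ N, V k with hT
  -- each h k maps V k into V k
  have hmap : ∀ k, ∀ y ∈ V k, h k y ∈ V k := by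
    intro k y hy
    by_contra hn
    have h1 : h k (h k y) = h k y := hid k _ hn
    have h2 : h k y = y := (hh k).bijective.1 h1
    rw [h2] at hn; exact hn hy
  -- points outside all V k are fixed by every iterComp
  have hfix : ∀ y, y ∉ (⋃ k, V k) → ∀ n, iterComp h n y = y := by
    intro y hy n
    induction n with
    | zero => rfl
    | succ n ih =>
      have : y ∉ V n := fun hyn => hy (Set.mem_iUnion.2 ⟨n, hyn⟩)
      simp only [iterComp, Function.comp_apply, ih, hid n y this]
  -- continuity of the iterates
  have hcontn : ∀ n, Continuous (iterComp h n) := by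
    intro n
    induction n with
    | zero => exact continuous_id
    | succ n ih => exact (hh n).continuous.comp ih
  -- key dichotomy
  have hkey : ∀ N m, N ≤ m → ∀ n, m ≤ n → ∀ y,
      iterComp h n y = iterComp h m y ∨
      (iterComp h n y ∈ T N ∧ iterComp h m y ∈ T N) := by
    intro N m hNm n hmn y
    induction n, hmn using Nat.le_induction with
    | base => exact Or.inl rfl
    | succ n hmn ih =>
      by_cases hv : iterComp h n y ∈ V n
      · have hnT : iterComp h n y ∈ T N :=
          Set.mem_iUnion.2 ⟨n, Set.mem_iUnion.2 ⟨le_trans hNm hmn, hv⟩⟩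
        have hsT : iterComp h (n + 1) y ∈ T N := by
          have : h n (iterComp h n y) ∈ V n := hmap n _ hv
          exact Set.mem_iUnion.2 ⟨n, Set.mem_iUnion.2 ⟨le_trans hNm hmn, this⟩⟩
        refine Or.inr ⟨hsT, ?_⟩
        rcases ih with heq | ⟨_, hmT⟩
        · exact heq ▸ hnT
        · exact hmT
      · have : iterComp h (n + 1) y = iterComp h n y := hid n _ hv
        rw [this]; exact ih
  -- distance estimate between iterates
  have hest : ∀ N m, N ≤ m → ∀ n, m ≤ n → ∀ y,
      edist (iterComp h m y) (iterComp h n y) ≤ EMetric.diam (T N) := by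
    intro N m hNm n hmn y
    rcases hkey N m hNm n hmn y with heq | ⟨hn, hm⟩
    · rw [heq]; simp
    · exact EMetric.edist_le_diam_of_mem hm hn
  -- distance estimate to the limit
  have hestlim : ∀ N m, N ≤ m → ∀ y,
      edist (iterComp h m y) (Hinf y) ≤ EMetric.diam (T N) := by
    intro N m hNm y
    have htend : Tendsto (fun n => edist (iterComp h m y) (iterComp h n y)) atTop
        (𝓝 (edist (iterComp h m y) (Hinf y))) :=
      (continuous_edist.continuousAt (x := (iterComp h m y, Hinf y))).tendsto.comp
        ((tendsto_const_nhds (x := iterComp h m y)).prodMk_nhds (hlim y))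
    refine le_of_tendsto htend ?_
    filter_upwards [eventually_ge_atTop m] with n hn
    exact hest N m hNm n hn y
  -- uniform convergence, hence continuity of Hinf
  have hunif : TendstoUniformly (fun n y => iterComp h n y) Hinf atTop := by
    rw [EMetric.tendstoUniformly_iff]
    intro ε hε
    have : ∀ᶠ N in atTop, EMetric.diam (T N) < ε :=
      hdiam.eventually_lt_const hε
    rcases this.exists with ⟨N, hN⟩
    filter_upwards [eventually_ge_atTop N] with n hn y
    calc edist (Hinf y) (iterComp h n y) = edist (iterComp h n y) (Hinf y) :=
          edist_comm _ _
      _ ≤ EMetric.diam (T N) := hestlim N n hn y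
      _ < ε := hN
  have hcont : Continuous Hinf :=
    hunif.continuous (Eventually.of_forall hcontn).frequently
  -- Hinf is the identity outside ⋃ V k
  have hfixinf : ∀ y, y ∉ (⋃ k, V k) → Hinf y = y := by
    intro y hy
    have : Tendsto (fun n => iterComp h n y) atTop (𝓝 y) := by
      have : (fun n => iterComp h n y) = fun _ => y := funext (hfix y hy)
      rw [this]; exact tendsto_const_nhds
    exact tendsto_nhds_unique (hlim y) this
  -- preimages of compacts are compact
  have hproper : IsProperMap Hinf := by
    rw [isProperMap_iff_isCompact_preimage]
    refine ⟨hcont, fun K hK => ?_⟩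
    have hsub : Hinf ⁻¹' K ⊆ A ∪ K := by
      intro y hy
      by_cases hyV : y ∈ (⋃ k, V k)
      · exact Or.inl (interior_subset (hVA hyV))
      · exact Or.inr (hfixinf y hyV ▸ hy)
    exact (hA.union hK).of_isClosed_subset (hK.isClosed.preimage hcont) hsub
  exact isHomeomorph_iff_continuous_isClosedMap_bijective.2
    ⟨hcont, hproper.isClosedMap, hbij⟩
end

section
/- Let f : [0,1] → ℝ³ be the inclusion of a straight line segment (an affine embedding), let p = f(0), and let B be an open ball centered at p in ℝ³. Then the complement B \ f([0,1]) is simply connected (its fundamental group is trivial). -/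
open Set Metric unitInterval RealInnerProductSpace

noncomputable section

namespace VK

variable {Y : Type*} [TopologicalSpace Y]

/-- linear interpolation inside the unit interval -/
def ilerp (a b : I) (s : I) : I :=
  ⟨(1 - (s:ℝ)) * a + s * b, by
    constructor
    · nlinarith [a.2.1, b.2.1, s.2.1, s.2.2]
    · nlinarith [a.2.1, a.2.2, b.2.1, b.2.2, s.2.1, s.2.2]⟩

@[simp] lemma ilerp_coe (a b s : I) : (ilerp a b s : ℝ) = (1 - (s:ℝ)) * a + s * b := rfl

@[simp] lemma ilerp_zero (a b : I) : ilerp a b 0 = a := by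
  apply Subtype.ext; simp [ilerp]

@[simp] lemma ilerp_one (a b : I) : ilerp a b 1 = b := by
  apply Subtype.ext; simp [ilerp]

@[simp] lemma ilerp_self (a s : I) : ilerp a a s = a := by
  apply Subtype.ext; simp [ilerp]; ring

lemma continuous_ilerp {a b : I} : Continuous (ilerp a b) := by
  apply Continuous.subtype_mk; fun_prop

lemma ilerp_mem_Icc {a b : I} (h : a ≤ b) (s : I) : ilerp a b s ∈ Icc a b := by
  constructor <;> rw [← Subtype.coe_le_coe] <;> simp only [ilerp_coe] <;>
    nlinarith [s.2.1, s.2.2, Subtype.coe_le_coe.2 h]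

/-- The subpath of `γ` from time `a` to time `b`, affinely reparametrized. -/
def seg {x y : Y} (γ : Path x y) (a b : I) : Path (γ a) (γ b) where
  toFun s := γ (ilerp a b s)
  continuous_toFun := γ.continuous.comp continuous_ilerp
  source' := by simp
  target' := by simp

@[simp] lemma ilerp_zero_one (s : I) : ilerp 0 1 s = s := by
  apply Subtype.ext; simp [ilerp]

lemma seg_self {x y : Y} (γ : Path x y) (a : I) : seg γ a a = Path.refl (γ a) := by
  ext s; simp [seg, Path.refl]; rfl

lemma seg_range_subset {x y : Y} (γ : Path x y) {a b : I} (h : a ≤ b) :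
    range (seg γ a b) ⊆ γ '' Icc a b := by
  rintro _ ⟨s, rfl⟩
  exact ⟨ilerp a b s, ilerp_mem_Icc h s, rfl⟩

lemma seg_zero_one {x y : Y} (γ : Path x y) :
    seg γ 0 1 = γ.cast γ.source γ.target := by
  ext s; simp [seg, Path.cast]



/-- real-valued parametrization of the concatenation of two affine reparametrizations -/
def transParamR (a b c : ℝ) (s : ℝ) : ℝ :=
  if s ≤ 1/2 then (1-2*s)*a + 2*s*b else (2-2*s)*b + (2*s-1)*c

lemma continuous_transParamR (a b c : ℝ) : Continuous (transParamR a b c) := by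
  apply Continuous.if_le (by fun_prop) (by fun_prop) continuous_id continuous_const
  intro s hs; subst hs; ring

lemma transParamR_mem (a b c : I) {s : ℝ} (hs : s ∈ I) :
    transParamR a b c s ∈ I := by
  unfold transParamR
  obtain ⟨h0, h1⟩ := hs
  split_ifs with h <;> constructor <;>
    nlinarith [a.2.1, a.2.2, b.2.1, b.2.2, c.2.1, c.2.2]

/-- `I`-valued version -/
def transParam (a b c : I) (s : I) : I := ⟨transParamR a b c s, transParamR_mem a b c s.2⟩

lemma continuous_transParam (a b c : I) : Continuous (transParam a b c) :=
  Continuous.subtype_mk ((continuous_transParamR a b c).comp continuous_subtype_val) _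

@[simp] lemma transParam_zero (a b c : I) : transParam a b c 0 = a := by
  apply Subtype.ext
  simp [transParam, transParamR]

@[simp] lemma transParam_one (a b c : I) : transParam a b c 1 = c := by
  apply Subtype.ext
  simp [transParam, transParamR]
  norm_num

lemma seg_trans_apply {x y : Y} (γ : Path x y) (a b c : I) (s : I) :
    ((seg γ a b).trans (seg γ b c)) s = γ (transParam a b c s) := by
  rw [Path.trans_apply]
  split_ifs with h
  · show γ _ = γ _
    congr 1
    apply Subtype.ext
    simp only [ilerp_coe, transParam, transParamR, if_pos h]
  · show γ _ = γ _
    congr 1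
    apply Subtype.ext
    simp only [ilerp_coe, transParam, transParamR, if_neg h]
    ring

/-- Concatenating two consecutive subpaths is homotopic to the single subpath. -/
lemma seg_trans {x y : Y} (γ : Path x y) (a b c : I) :
    ((seg γ a b).trans (seg γ b c)).Homotopic (seg γ a c) := by
  refine ⟨⟨⟨⟨fun q => γ (ilerp (transParam a b c q.2) (ilerp a c q.2) q.1), ?_⟩, ?_, ?_⟩, ?_⟩⟩
  · apply γ.continuous.comp
    apply Continuous.subtype_mk
    have h1 : Continuous fun q : I × I => (transParam a b c q.2 : ℝ) :=
      continuous_subtype_val.comp ((continuous_transParam a b c).comp continuous_snd)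
    fun_prop
  · intro s
    simp only [ilerp_zero]
    exact (seg_trans_apply γ a b c s).symm
  · intro s
    simp only [ilerp_one]
    rfl
  · rintro t s (rfl | rfl)
    · show γ _ = ((seg γ a b).trans (seg γ b c)) 0
      have h2 : ilerp (transParam a b c 0) (ilerp a c 0) t = a := by simp
      rw [h2, seg_trans_apply]
      simp
    · show γ _ = ((seg γ a b).trans (seg γ b c)) 1
      have h2 : ilerp (transParam a b c 1) (ilerp a c 1) t = c := by simp
      rw [h2, seg_trans_apply]
      simp



lemma homotopic_of_cast {x y x' y' : Y} (hx : x' = x) (hy : y' = y) {p q : Path x y}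
    (h : (p.cast hx hy).Homotopic (q.cast hx hy)) : p.Homotopic q := by
  obtain ⟨F⟩ := h
  exact ⟨F⟩

lemma cancel_symm {x y : Y} {f g : Path x y}
    (h : (f.trans g.symm).Homotopic (Path.refl x)) : f.Homotopic g := by
  have h1 : f.Homotopic (f.trans (Path.refl y)) := ⟨(Path.Homotopy.transRefl f).symm⟩
  have h2 : (f.trans (Path.refl y)).Homotopic (f.trans (g.symm.trans g)) :=
    Path.Homotopic.hcomp (Path.Homotopic.refl f) ⟨Path.Homotopy.reflSymmTrans g⟩
  have h3 : (f.trans (g.symm.trans g)).Homotopic ((f.trans g.symm).trans g) :=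
    ⟨(Path.Homotopy.transAssoc f g.symm g).symm⟩
  have h4 : ((f.trans g.symm).trans g).Homotopic ((Path.refl x).trans g) :=
    Path.Homotopic.hcomp h (Path.Homotopic.refl g)
  have h5 : ((Path.refl x).trans g).Homotopic g := ⟨Path.Homotopy.reflTrans g⟩
  exact (((h1.trans h2).trans h3).trans h4).trans h5

lemma unconj {x₀ x : Y} (c : Path x₀ x) {ℓ : Path x x}
    (h : ((c.trans ℓ).trans c.symm).Homotopic (Path.refl x₀)) :
    ℓ.Homotopic (Path.refl x) := by
  have k1 : ℓ.Homotopic ((Path.refl x).trans ℓ) := ⟨(Path.Homotopy.reflTrans ℓ).symm⟩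
  have k2 : ((Path.refl x).trans ℓ).Homotopic ((c.symm.trans c).trans ℓ) :=
    Path.Homotopic.hcomp ⟨Path.Homotopy.reflSymmTrans c⟩ (Path.Homotopic.refl ℓ)
  have k3 : ((c.symm.trans c).trans ℓ).Homotopic (c.symm.trans (c.trans ℓ)) :=
    ⟨Path.Homotopy.transAssoc c.symm c ℓ⟩
  have k4 : (c.trans ℓ).Homotopic (((c.trans ℓ).trans c.symm).trans c) := by
    have t1 : (c.trans ℓ).Homotopic ((c.trans ℓ).trans (Path.refl x)) :=
      ⟨(Path.Homotopy.transRefl _).symm⟩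
    have t2 : ((c.trans ℓ).trans (Path.refl x)).Homotopic
        ((c.trans ℓ).trans (c.symm.trans c)) :=
      Path.Homotopic.hcomp (Path.Homotopic.refl _) ⟨Path.Homotopy.reflSymmTrans c⟩
    have t3 : ((c.trans ℓ).trans (c.symm.trans c)).Homotopic
        (((c.trans ℓ).trans c.symm).trans c) :=
      ⟨(Path.Homotopy.transAssoc _ _ _).symm⟩
    exact (t1.trans t2).trans t3
  have k5 : (((c.trans ℓ).trans c.symm).trans c).Homotopic ((Path.refl x₀).trans c) :=
    Path.Homotopic.hcomp h (Path.Homotopic.refl c)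
  have k6 : ((Path.refl x₀).trans c).Homotopic c := ⟨Path.Homotopy.reflTrans c⟩
  have k7 : (c.symm.trans (c.trans ℓ)).Homotopic (c.symm.trans c) :=
    Path.Homotopic.hcomp (Path.Homotopic.refl _) ((k4.trans k5).trans k6)
  have k9 : (c.symm.trans c).Homotopic (Path.refl x) := ⟨(Path.Homotopy.reflSymmTrans c).symm⟩
  exact (((k1.trans k2).trans k3).trans k7).trans k9

theorem vanKampen_simplyConnected (U V : Set Y)
    (hUo : IsOpen U) (hVo : IsOpen V) (hUV : U ∪ V = univ)
    (x₀ : Y) (hx₀U : x₀ ∈ U) (hx₀V : x₀ ∈ V)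
    (hU : ∀ {a b : Y} (f g : Path a b), range f ⊆ U → range g ⊆ U → f.Homotopic g)
    (hV : ∀ {a b : Y} (f g : Path a b), range f ⊆ V → range g ⊆ V → f.Homotopic g)
    (hUc : ∀ z ∈ U, JoinedIn U x₀ z)
    (hVc : ∀ z ∈ V, JoinedIn V x₀ z)
    (hUVc : ∀ z ∈ U ∩ V, JoinedIn (U ∩ V) x₀ z) :
    SimplyConnectedSpace Y := by
  have hWhom : ∀ (W : Set Y), W = U ∨ W = V →
      ∀ {a b : Y} (f g : Path a b), range f ⊆ W → range g ⊆ W → f.Homotopic g := by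
    rintro W (rfl | rfl) a b f g hf hg
    · exact hU f g hf hg
    · exact hV f g hf hg
  have hmemW : ∀ z : Y, z ∈ U ∨ z ∈ V := by
    intro z
    have : z ∈ U ∪ V := by rw [hUV]; trivial
    exact this
  -- every loop at x₀ is null-homotopic
  have key : ∀ γ : Path x₀ x₀, γ.Homotopic (Path.refl x₀) := by
    intro γ
    have hc₁ : ∀ i : Bool, IsOpen (cond i (⇑γ ⁻¹' U) (⇑γ ⁻¹' V)) := by
      rintro (_ | _)
      · exact hVo.preimage γ.continuous
      · exact hUo.preimage γ.continuous
    have hc₂ : (univ : Set I) ⊆ ⋃ i : Bool, cond i (⇑γ ⁻¹' U) (⇑γ ⁻¹' V) := by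
      intro s _
      rcases hmemW (γ s) with h | h
      · exact mem_iUnion.2 ⟨true, h⟩
      · exact mem_iUnion.2 ⟨false, h⟩
    obtain ⟨t, ht0, htmono, ⟨N, hN⟩, hsub⟩ :=
      exists_monotone_Icc_subset_open_cover_unitInterval hc₁ hc₂
    have hsub' : ∀ n : ℕ, ∃ W : Set Y, (W = U ∨ W = V) ∧
        ∀ s ∈ Icc (t n) (t (n + 1)), γ s ∈ W := by
      intro n
      obtain ⟨i, hi⟩ := hsub n
      cases i
      · exact ⟨V, Or.inr rfl, fun s hs => hi hs⟩
      · exact ⟨U, Or.inl rfl, fun s hs => hi hs⟩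
    have main : ∀ n : ℕ, ∀ W : Set Y, (W = U ∨ W = V) → γ (t n) ∈ W →
        ∃ δ : Path (γ 0) (γ (t n)), range δ ⊆ W ∧ (seg γ 0 (t n)).Homotopic δ := by
      intro n
      induction n with
      | zero =>
        rw [ht0]
        intro W hW hmem
        refine ⟨Path.refl (γ 0), ?_, by rw [seg_self]⟩
        rintro _ ⟨s, rfl⟩
        exact hmem
      | succ n ih =>
        intro W' hW' hmem'
        obtain ⟨Wn, hWn, hWnsub⟩ := hsub' n
        have hle : t n ≤ t (n + 1) := htmono (Nat.le_succ n)
        have hzn : γ (t n) ∈ Wn := hWnsub _ ⟨le_refl _, hle⟩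
        have hzs : γ (t (n + 1)) ∈ Wn := hWnsub _ ⟨hle, le_refl _⟩
        obtain ⟨δ, hδr, hδh⟩ := ih Wn hWn hzn
        have hpiece : range (seg γ (t n) (t (n + 1))) ⊆ Wn := by
          refine (seg_range_subset γ hle).trans ?_
          rintro _ ⟨s, hs, rfl⟩
          exact hWnsub s hs
        -- a connecting path from x₀ to the new junction, inside both W' and Wn
        have hex : ∃ δ0 : Path x₀ (γ (t (n + 1))), (∀ s, δ0 s ∈ W') ∧ (∀ s, δ0 s ∈ Wn) := by
          by_cases hsame : W' = Wn
          · subst hsame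
            have hjoin : JoinedIn W' x₀ (γ (t (n + 1))) := by
              rcases hW' with rfl | rfl
              · exact hUc _ hmem'
              · exact hVc _ hmem'
            exact ⟨hjoin.somePath, hjoin.somePath_mem, hjoin.somePath_mem⟩
          · have hmemUV : γ (t (n + 1)) ∈ U ∩ V := by
              rcases hW' with rfl | rfl <;> rcases hWn with rfl | rfl
              · exact absurd rfl hsame
              · exact ⟨hmem', hzs⟩
              · exact ⟨hzs, hmem'⟩
              · exact absurd rfl hsame
            have hjoin := hUVc _ hmemUV
            refine ⟨hjoin.somePath, fun s => ?_, fun s => ?_⟩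
            · rcases hW' with rfl | rfl
              · exact (hjoin.somePath_mem s).1
              · exact (hjoin.somePath_mem s).2
            · rcases hWn with rfl | rfl
              · exact (hjoin.somePath_mem s).1
              · exact (hjoin.somePath_mem s).2
        obtain ⟨δ0, hδ0W', hδ0Wn⟩ := hex
        refine ⟨δ0.cast γ.source rfl, ?_, ?_⟩
        · rintro _ ⟨s, rfl⟩
          exact hδ0W' s
        · have s1 : (seg γ 0 (t (n + 1))).Homotopic
              ((seg γ 0 (t n)).trans (seg γ (t n) (t (n + 1)))) :=
            (seg_trans γ 0 (t n) (t (n + 1))).symm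
          have s2 : ((seg γ 0 (t n)).trans (seg γ (t n) (t (n + 1)))).Homotopic
              (δ.trans (seg γ (t n) (t (n + 1)))) :=
            Path.Homotopic.hcomp hδh (Path.Homotopic.refl _)
          have s3 : (δ.trans (seg γ (t n) (t (n + 1)))).Homotopic (δ0.cast γ.source rfl) := by
            apply hWhom Wn hWn
            · rw [Path.trans_range]
              exact union_subset hδr hpiece
            · rintro _ ⟨s, rfl⟩
              exact hδ0Wn s
          exact (s1.trans s2).trans s3
    have hN' : t N = 1 := hN N le_rfl
    have mN := main N
    rw [hN'] at mN
    obtain ⟨δ, hδr, hδh⟩ := mN U (Or.inl rfl) (by rw [γ.target]; exact hx₀U)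
    have hρ : (Path.refl x₀).cast γ.source γ.target |>.Homotopic ((Path.refl x₀).cast γ.source γ.target) := Path.Homotopic.refl _
    have hfin : δ.Homotopic ((Path.refl x₀).cast γ.source γ.target) := by
      apply hU δ _ hδr
      rintro _ ⟨s, rfl⟩
      show x₀ ∈ U
      exact hx₀U
    have : (seg γ 0 1).Homotopic ((Path.refl x₀).cast γ.source γ.target) := hδh.trans hfin
    rw [seg_zero_one] at this
    exact homotopic_of_cast γ.source γ.target this
  rw [simply_connected_iff_paths_homotopic']
  constructor
  · refine ⟨⟨x₀⟩, fun z w => ?_⟩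
    have hz : Joined x₀ z := by
      rcases hmemW z with h | h
      · exact (hUc z h).joined
      · exact (hVc z h).joined
    have hw : Joined x₀ w := by
      rcases hmemW w with h | h
      · exact (hUc w h).joined
      · exact (hVc w h).joined
    exact hz.symm.trans hw
  · intro a b f g
    have hjoin : Joined x₀ a := by
      rcases hmemW a with h | h
      · exact (hUc a h).joined
      · exact (hVc a h).joined
    obtain ⟨c⟩ := hjoin
    have hkey := key ((c.trans (f.trans g.symm)).trans c.symm)
    exact cancel_symm (unconj c hkey)



abbrev E3 := EuclideanSpace ℝ (Fin 3)

variable (p v : E3) (r : ℝ)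

/-- the closed ray from `p` in direction `v` -/
def raySet : Set E3 := {x | ∃ t : ℝ, 0 ≤ t ∧ x = p + t • v}

/-- the ball minus the ray -/
def setU : Set E3 := Metric.ball p r \ raySet p v

/-- the part of the ball strictly beyond the tip of the segment -/
def setV : Set E3 := Metric.ball p r ∩ {x | ‖v‖ ^ 2 < ⟪v, x - p⟫}

section lemmas
variable {p v r}

lemma inner_ray (t : ℝ) : ⟪v, (p + t • v) - p⟫ = t * ‖v‖ ^ 2 := by
  rw [add_sub_cancel_left, real_inner_smul_right, real_inner_self_eq_norm_sq]

lemma raySet_closed (hv : v ≠ 0) : IsClosed (raySet p v) := by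
  have hL : (0:ℝ) < ‖v‖ ^ 2 := pow_pos (norm_pos_iff.2 hv) 2
  have : raySet p v =
      ((· - p) ⁻¹' (ℝ ∙ v)) ∩ {x | 0 ≤ ⟪v, x - p⟫} := by
    ext x
    constructor
    · rintro ⟨t, ht, rfl⟩
      refine ⟨?_, ?_⟩
      · show (p + t • v) - p ∈ (ℝ ∙ v)
        rw [add_sub_cancel_left]
        exact Submodule.mem_span_singleton.2 ⟨t, rfl⟩
      · show 0 ≤ ⟪v, (p + t • v) - p⟫
        rw [inner_ray]
        exact mul_nonneg ht (sq_nonneg _)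
    · rintro ⟨hsp, hin⟩
      obtain ⟨t, ht⟩ := Submodule.mem_span_singleton.1 hsp
      have ht' : t • v = x - p := ht
      have hin' : 0 ≤ ⟪v, x - p⟫ := hin
      refine ⟨t, ?_, ?_⟩
      · have h2 : ⟪v, x - p⟫ = t * ‖v‖ ^ 2 := by
          rw [← ht', real_inner_smul_right, real_inner_self_eq_norm_sq]
        nlinarith [hin', h2]
      · have : p + t • v = p + (x - p) := by rw [ht']
        rw [this]; abel
  rw [this]
  refine IsClosed.inter ?_ ?_
  · exact ((ℝ ∙ v).closed_of_finiteDimensional).preimage (continuous_id.sub continuous_const)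
  · exact isClosed_le continuous_const (continuous_const.inner (continuous_id.sub continuous_const))

lemma setU_open (hv : v ≠ 0) : IsOpen (setU p v r) :=
  isOpen_ball.sdiff (raySet_closed hv)

lemma setV_open : IsOpen (setV p v r) :=
  isOpen_ball.inter (isOpen_lt continuous_const (continuous_const.inner (continuous_id.sub continuous_const)))

lemma setV_convex : Convex ℝ (setV p v r) := by
  refine (convex_ball p r).inter ?_
  intro x hx y hy a b ha hb hab
  simp only [mem_setOf_eq] at hx hy ⊢
  have hexp : ⟪v, (a • x + b • y) - p⟫ = a * ⟪v, x - p⟫ + b * ⟪v, y - p⟫ := by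
    have hp : (a • x + b • y) - p = a • (x - p) + b • (y - p) := by
      linear_combination (norm := module) hab • p
    rw [hp, inner_add_right, real_inner_smul_right, real_inner_smul_right]
  rw [hexp]
  rcases eq_or_lt_of_le ha with ha0 | hapos
  · have hb1 : b = 1 := by linarith
    rw [← ha0, hb1]; simpa using hy
  · nlinarith [mul_lt_mul_of_pos_left hx hapos, mul_le_mul_of_nonneg_left hy.le hb]

/-- the star center of `setU` -/
def qpt (p v : E3) (r : ℝ) : E3 := p - (r / (2 * ‖v‖)) • v

lemma qpt_mem_ball (hv : v ≠ 0) (hr : 0 < r) : qpt p v r ∈ Metric.ball p r := by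
  have hL : (0:ℝ) < ‖v‖ := norm_pos_iff.2 hv
  rw [mem_ball, dist_eq_norm, qpt]
  have : p - (r / (2 * ‖v‖)) • v - p = -((r / (2 * ‖v‖)) • v) := by abel
  rw [this, norm_neg, norm_smul, Real.norm_eq_abs, abs_of_pos (by positivity)]
  have hL0 : ‖v‖ ≠ 0 := ne_of_gt hL
  have : r / (2 * ‖v‖) * ‖v‖ = r / 2 := by field_simp
  rw [this]
  linarith

lemma setU_starConvex (hv : v ≠ 0) (hr : 0 < r) : StarConvex ℝ (qpt p v r) (setU p v r) := by
  have hL : (0:ℝ) < ‖v‖ := norm_pos_iff.2 hv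
  have hc : (0:ℝ) < r / (2 * ‖v‖) := by positivity
  intro y hy a b ha hb hab
  obtain ⟨hyb, hyr⟩ := hy
  constructor
  · exact (convex_ball p r) (qpt_mem_ball hv hr) hyb ha hb hab
  · rintro ⟨s, hs, heq⟩
    have hq : qpt p v r = p - (r / (2 * ‖v‖)) • v := rfl
    have hkey : b • (y - p) = (s + a * (r / (2 * ‖v‖))) • v := by
      linear_combination (norm := module) heq - a • hq - hab • p
    rcases eq_or_lt_of_le hb with hb0 | hbpos
    · -- b = 0, a = 1
      have ha1 : a = 1 := by linarith
      rw [← hb0, zero_smul] at hkey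
      have : s + a * (r / (2 * ‖v‖)) = 0 := by
        by_contra hne
        exact hv (smul_eq_zero.1 hkey.symm |>.resolve_left hne)
      nlinarith
    · -- b > 0
      apply hyr
      refine ⟨b⁻¹ * (s + a * (r / (2 * ‖v‖))), by positivity, ?_⟩
      have h5 : y - p = (b⁻¹ * (s + a * (r / (2 * ‖v‖)))) • v := by
        rw [mul_smul, ← hkey, smul_smul, inv_mul_cancel₀ (ne_of_gt hbpos), one_smul]
      rw [← h5]; abel

/-- the two-set decomposition of the ball minus the segment -/
lemma ball_diff_seg_eq_union (hv : v ≠ 0) :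
    Metric.ball p r \ ((fun t : ℝ => p + t • v) '' Icc (0:ℝ) 1) = setU p v r ∪ setV p v r := by
  have hL : (0:ℝ) < ‖v‖ ^ 2 := pow_pos (norm_pos_iff.2 hv) 2
  ext x
  constructor
  · rintro ⟨hxb, hxs⟩
    by_cases hxr : x ∈ raySet p v
    · right
      obtain ⟨t, ht, rfl⟩ := hxr
      refine ⟨hxb, ?_⟩
      have ht1 : 1 < t := by
        by_contra hle
        exact hxs ⟨t, ⟨ht, not_lt.1 hle⟩, rfl⟩
      show ‖v‖ ^ 2 < ⟪v, (p + t • v) - p⟫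
      rw [inner_ray]
      nlinarith
    · exact Or.inl ⟨hxb, hxr⟩
  · rintro (⟨hxb, hxr⟩ | ⟨hxb, hxg⟩)
    · refine ⟨hxb, fun hxs => hxr ?_⟩
      obtain ⟨t, ⟨ht0, _⟩, rfl⟩ := hxs
      exact ⟨t, ht0, rfl⟩
    · refine ⟨hxb, fun hxs => ?_⟩
      obtain ⟨t, ⟨ht0, ht1⟩, rfl⟩ := hxs
      have hxg' : ‖v‖ ^ 2 < ⟪v, (p + t • v) - p⟫ := hxg
      rw [inner_ray] at hxg'
      nlinarith

/-- when the segment reaches out of the ball, the complement is exactly `setU` -/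
lemma ball_diff_seg_eq_setU (hv : v ≠ 0) (hrL : r ≤ ‖v‖) :
    Metric.ball p r \ ((fun t : ℝ => p + t • v) '' Icc (0:ℝ) 1) = setU p v r := by
  have hL : (0:ℝ) < ‖v‖ := norm_pos_iff.2 hv
  ext x
  constructor
  · rintro ⟨hxb, hxs⟩
    refine ⟨hxb, ?_⟩
    rintro ⟨t, ht, rfl⟩
    apply hxs
    refine ⟨t, ⟨ht, ?_⟩, rfl⟩
    have : dist (p + t • v) p < r := hxb
    rw [dist_eq_norm, add_sub_cancel_left, norm_smul, Real.norm_eq_abs, abs_of_nonneg ht] at this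
    nlinarith
  · rintro ⟨hxb, hxr⟩
    refine ⟨hxb, fun hxs => hxr ?_⟩
    obtain ⟨t, ⟨ht0, _⟩, rfl⟩ := hxs
    exact ⟨t, ht0, rfl⟩

end lemmas


section Geometry2
variable {p v : E3} {r : ℝ}

lemma joinedIn_segment {W : Set E3} {x y : E3}
    (h : ∀ θ : ℝ, 0 ≤ θ → θ ≤ 1 → (1 - θ) • x + θ • y ∈ W) : JoinedIn W x y := by
  refine ⟨⟨⟨fun s => (1 - (s:ℝ)) • x + (s:ℝ) • y, by fun_prop⟩, by simp, by simp⟩,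
    fun s => h s s.2.1 s.2.2⟩

lemma qpt_mem_setU (hv : v ≠ 0) (hr : 0 < r) : qpt p v r ∈ setU p v r := by
  have hL : (0:ℝ) < ‖v‖ := norm_pos_iff.2 hv
  refine ⟨qpt_mem_ball hv hr, ?_⟩
  rintro ⟨s, hs, heq⟩
  have h1 : (-(r / (2 * ‖v‖)) - s) • v = 0 := by
    have : qpt p v r = p + s • v := heq
    rw [qpt] at this
    linear_combination (norm := module) this
  have h2 : -(r / (2 * ‖v‖)) - s = 0 := by
    by_contra hne
    exact hv ((smul_eq_zero.1 h1).resolve_left hne)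
  have : 0 < r / (2 * ‖v‖) := by positivity
  nlinarith

lemma joinedIn_setU_of_star (hv : v ≠ 0) (hr : 0 < r) {z : E3} (hz : z ∈ setU p v r) :
    JoinedIn (setU p v r) (qpt p v r) z := by
  apply joinedIn_segment
  intro θ h0 h1
  exact setU_starConvex hv hr hz (by linarith) h0 (by ring)

/-- a point strictly beyond the tip, with a nonzero component orthogonal to `v`,
is in `setU ∩ setV` as soon as it is in the ball -/
lemma mem_UV_of (hv : v ≠ 0) {t' : ℝ} {w : E3} (hw : ⟪v, w⟫ = 0) (hwne : w ≠ 0)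
    (ht' : 1 < t') (hball : p + t' • v + w ∈ ball p r) :
    p + t' • v + w ∈ setU p v r ∩ setV p v r := by
  have hL : (0:ℝ) < ‖v‖ ^ 2 := pow_pos (norm_pos_iff.2 hv) 2
  have hinner : ⟪v, (p + t' • v + w) - p⟫ = t' * ‖v‖ ^ 2 := by
    have : (p + t' • v + w) - p = t' • v + w := by abel
    rw [this, inner_add_right, real_inner_smul_right, real_inner_self_eq_norm_sq, hw, add_zero]
  refine ⟨⟨hball, ?_⟩, hball, ?_⟩
  · rintro ⟨s, hs, heq⟩
    have h1 : w = (s - t') • v := by linear_combination (norm := module) heq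
    have h2 : ⟪v, w⟫ = (s - t') * ‖v‖ ^ 2 := by
      rw [h1, real_inner_smul_right, real_inner_self_eq_norm_sq]
    have h3 : s - t' = 0 := by
      rw [hw] at h2
      by_contra hne
      exact hne (by nlinarith [h2.symm])
    apply hwne
    rw [h1, h3, zero_smul]
  · show ‖v‖ ^ 2 < ⟪v, (p + t' • v + w) - p⟫
    rw [hinner]
    nlinarith

/-- the basepoint family: points at height `(‖v‖+r)/2` along `v`, at distance `(r-‖v‖)/4`
in an orthogonal direction -/
def xipt (p v : E3) (r : ℝ) (u : E3) : E3 :=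
  p + ((‖v‖ + r) / (2 * ‖v‖)) • v + ((r - ‖v‖) / 4) • u

lemma xipt_mem_ball (hv : v ≠ 0) (hLr : ‖v‖ < r) {u : E3} (hu : ‖u‖ = 1) :
    xipt p v r u ∈ ball p r := by
  have hL : (0:ℝ) < ‖v‖ := norm_pos_iff.2 hv
  rw [mem_ball, dist_eq_norm]
  have h1 : xipt p v r u - p = ((‖v‖ + r) / (2 * ‖v‖)) • v + ((r - ‖v‖) / 4) • u := by
    rw [xipt]; abel
  rw [h1]
  calc ‖((‖v‖ + r) / (2 * ‖v‖)) • v + ((r - ‖v‖) / 4) • u‖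
      ≤ ‖((‖v‖ + r) / (2 * ‖v‖)) • v‖ + ‖((r - ‖v‖) / 4) • u‖ := norm_add_le _ _
    _ = (‖v‖ + r) / (2 * ‖v‖) * ‖v‖ + (r - ‖v‖) / 4 := by
        rw [norm_smul, norm_smul, Real.norm_eq_abs, Real.norm_eq_abs,
          abs_of_pos (show (0:ℝ) < (‖v‖ + r) / (2 * ‖v‖) from div_pos (by linarith) (by linarith)),
          abs_of_pos (show (0:ℝ) < (r - ‖v‖) / 4 by linarith), hu, mul_one]
    _ < r := by
        have : (‖v‖ + r) / (2 * ‖v‖) * ‖v‖ = (‖v‖ + r) / 2 := by field_simp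
        rw [this]
        nlinarith

lemma one_lt_cst (hv : v ≠ 0) (hLr : ‖v‖ < r) : 1 < (‖v‖ + r) / (2 * ‖v‖) := by
  have hL : (0:ℝ) < ‖v‖ := norm_pos_iff.2 hv
  rw [lt_div_iff₀ (by positivity)]
  nlinarith

lemma xipt_mem_UV (hv : v ≠ 0) (hLr : ‖v‖ < r) {u : E3} (hu : ‖u‖ = 1) (huv : ⟪v, u⟫ = 0) :
    xipt p v r u ∈ setU p v r ∩ setV p v r := by
  have hρ : (0:ℝ) < (r - ‖v‖) / 4 := by linarith
  refine mem_UV_of hv ?_ ?_ (one_lt_cst hv hLr) (xipt_mem_ball hv hLr hu)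
  · rw [real_inner_smul_right, huv, mul_zero]
  · apply smul_ne_zero (ne_of_gt hρ)
    intro h0
    rw [h0, norm_zero] at hu
    norm_num at hu

/-- joining `z` to the point `xipt` in its own orthogonal direction, by a straight segment -/
lemma joinedIn_UV_to_xipt (hv : v ≠ 0) (hLr : ‖v‖ < r) {z : E3}
    (hz : z ∈ setU p v r ∩ setV p v r) :
    ∃ u : E3, ‖u‖ = 1 ∧ ⟪v, u⟫ = 0 ∧
      JoinedIn (setU p v r ∩ setV p v r) z (xipt p v r u) := by
  have hL : (0:ℝ) < ‖v‖ := norm_pos_iff.2 hv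
  have hL2 : (0:ℝ) < ‖v‖ ^ 2 := pow_pos hL 2
  have hρ : (0:ℝ) < (r - ‖v‖) / 4 := by linarith
  obtain ⟨⟨hzb, hzr⟩, _, hzV⟩ := hz
  have hzV' : ‖v‖ ^ 2 < ⟪v, z - p⟫ := hzV
  set tz : ℝ := ⟪v, z - p⟫ / ‖v‖ ^ 2 with htz_def
  set wz : E3 := z - p - tz • v with hwz_def
  have htz : 1 < tz := (one_lt_div hL2).2 hzV'
  have hwzv : ⟪v, wz⟫ = 0 := by
    rw [hwz_def, inner_sub_right, real_inner_smul_right, real_inner_self_eq_norm_sq, htz_def]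
    field_simp
    ring
  have hwzne : wz ≠ 0 := by
    intro h0
    apply hzr
    refine ⟨tz, by linarith, ?_⟩
    have : z - p - tz • v = 0 := h0
    have h2 : z = p + tz • v := by linear_combination (norm := module) this
    exact h2
  have hwznorm : (0:ℝ) < ‖wz‖ := norm_pos_iff.2 hwzne
  have hzdec : z = p + tz • v + wz := by rw [hwz_def]; abel
  set u : E3 := ‖wz‖⁻¹ • wz with hu_def
  have hu1 : ‖u‖ = 1 := by
    rw [hu_def, norm_smul, Real.norm_eq_abs, abs_of_pos (by positivity),
      inv_mul_cancel₀ (ne_of_gt hwznorm)]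
  have huv : ⟪v, u⟫ = 0 := by rw [hu_def, real_inner_smul_right, hwzv, mul_zero]
  refine ⟨u, hu1, huv, ?_⟩
  apply joinedIn_segment
  intro θ h0 h1
  set c := (‖v‖ + r) / (2 * ‖v‖) with hc_def
  have hc1 : 1 < c := one_lt_cst hv hLr
  have hform : (1 - θ) • z + θ • (xipt p v r u) =
      p + ((1 - θ) * tz + θ * c) • v + (((1 - θ) + θ * ((r - ‖v‖) / 4 * ‖wz‖⁻¹)) • wz) := by
    rw [hzdec, xipt, hu_def, ← hc_def]
    module
  have hball : (1 - θ) • z + θ • (xipt p v r u) ∈ ball p r :=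
    (convex_ball p r) hzb (xipt_mem_ball hv hLr hu1) (by linarith) h0 (by ring)
  rw [hform] at hball ⊢
  have hcoef : 0 < (1 - θ) + θ * ((r - ‖v‖) / 4 * ‖wz‖⁻¹) := by
    rcases eq_or_lt_of_le h1 with rfl | hlt
    · have : (0:ℝ) < (r - ‖v‖) / 4 * ‖wz‖⁻¹ := mul_pos hρ (inv_pos.2 hwznorm)
      nlinarith
    · have h2 : (0:ℝ) ≤ θ * ((r - ‖v‖) / 4 * ‖wz‖⁻¹) :=
        mul_nonneg h0 (mul_nonneg hρ.le (inv_nonneg.2 (norm_nonneg _)))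
      linarith
  refine mem_UV_of hv ?_ ?_ ?_ hball
  · rw [real_inner_smul_right, hwzv, mul_zero]
  · exact smul_ne_zero (ne_of_gt hcoef) hwzne
  · rcases eq_or_lt_of_le h1 with rfl | hlt
    · simpa using hc1
    · nlinarith

/-- joining two `xipt` points through the sphere of orthogonal directions -/
lemma joinedIn_UV_xipt_xipt (hv : v ≠ 0) (hLr : ‖v‖ < r) {u₁ u₂ : E3}
    (h₁ : ‖u₁‖ = 1) (hv₁ : ⟪v, u₁⟫ = 0) (h₂ : ‖u₂‖ = 1) (hv₂ : ⟪v, u₂⟫ = 0) :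
    JoinedIn (setU p v r ∩ setV p v r) (xipt p v r u₁) (xipt p v r u₂) := by
  have hρ : (0:ℝ) < (r - ‖v‖) / 4 := by linarith [norm_pos_iff.2 hv]
  set W : Submodule ℝ E3 := (ℝ ∙ v)ᗮ with hW_def
  have hrank : 1 < Module.rank ℝ W := by
    have hfr : Module.finrank ℝ W = 2 := by
      have h1 : Module.finrank ℝ (ℝ ∙ v) = 1 := finrank_span_singleton hv
      have h2 := Submodule.finrank_add_finrank_orthogonal (K := (ℝ ∙ v)) (𝕜 := ℝ) (E := E3)
      have h3 : Module.finrank ℝ E3 = 3 := by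
        simp [finrank_euclideanSpace]
      rw [hW_def]
      omega
    rw [← Module.finrank_eq_rank, hfr]
    exact_mod_cast one_lt_two
  have hu₁W : u₁ ∈ W := Submodule.mem_orthogonal_singleton_iff_inner_right.2 hv₁
  have hu₂W : u₂ ∈ W := Submodule.mem_orthogonal_singleton_iff_inner_right.2 hv₂
  have hs : IsPathConnected (sphere (0 : W) 1) := isPathConnected_sphere hrank 0 zero_le_one
  have hmem₁ : (⟨u₁, hu₁W⟩ : W) ∈ sphere (0 : W) 1 := by
    rw [mem_sphere_zero_iff_norm]
    exact h₁
  have hmem₂ : (⟨u₂, hu₂W⟩ : W) ∈ sphere (0 : W) 1 := by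
    rw [mem_sphere_zero_iff_norm]
    exact h₂
  obtain ⟨Γ, hΓ⟩ := hs.joinedIn _ hmem₁ _ hmem₂
  refine ⟨⟨⟨fun θ => p + ((‖v‖ + r) / (2 * ‖v‖)) • v + ((r - ‖v‖) / 4) • ((Γ θ : W) : E3), ?_⟩,
    ?_, ?_⟩, fun θ => ?_⟩
  · exact continuous_const.add ((continuous_subtype_val.comp Γ.continuous).fun_const_smul _)
  · simp only [Γ.source]
    rfl
  · simp only [Γ.target]
    rfl
  · show p + _ • v + _ • ((Γ θ : W) : E3) ∈ _
    have hθW : ((Γ θ : W) : E3) ∈ W := (Γ θ).2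
    have hθn : ‖((Γ θ : W) : E3)‖ = 1 := by
      have := hΓ θ
      rw [mem_sphere_zero_iff_norm] at this
      exact this
    refine mem_UV_of hv ?_ ?_ (one_lt_cst hv hLr) ?_
    · rw [real_inner_smul_right,
        Submodule.mem_orthogonal_singleton_iff_inner_right.1 hθW, mul_zero]
    · apply smul_ne_zero (ne_of_gt hρ)
      intro h0
      rw [h0, norm_zero] at hθn
      norm_num at hθn
    · exact xipt_mem_ball hv hLr hθn

end Geometry2


lemma exists_unit_orth {v : E3} (hv : v ≠ 0) : ∃ n : E3, ‖n‖ = 1 ∧ ⟪v, n⟫ = 0 := by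
  have h1 : Module.finrank ℝ (ℝ ∙ v) = 1 := finrank_span_singleton hv
  have h2 := Submodule.finrank_add_finrank_orthogonal (K := (ℝ ∙ v)) (𝕜 := ℝ) (E := E3)
  have h3 : Module.finrank ℝ E3 = 3 := by simp [finrank_euclideanSpace]
  have hne : ((ℝ ∙ v)ᗮ : Submodule ℝ E3) ≠ ⊥ := by
    intro hbot
    rw [hbot] at h2
    simp [finrank_bot] at h2
    omega
  obtain ⟨u, huW, hune⟩ := Submodule.exists_mem_ne_zero_of_ne_bot hne
  have hun : (0:ℝ) < ‖u‖ := norm_pos_iff.2 hune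
  refine ⟨‖u‖⁻¹ • u, ?_, ?_⟩
  · rw [norm_smul, Real.norm_eq_abs, abs_of_pos (by positivity), inv_mul_cancel₀ (ne_of_gt hun)]
  · rw [real_inner_smul_right,
      Submodule.mem_orthogonal_singleton_iff_inner_right.1 huW, mul_zero]

lemma joinedIn_restrict {s W : Set E3} (hWs : W ⊆ s) {x y : E3} (h : JoinedIn W x y)
    (hx : x ∈ s) (hy : y ∈ s) :
    JoinedIn (Subtype.val ⁻¹' W : Set ↥s) ⟨x, hx⟩ ⟨y, hy⟩ := by
  obtain ⟨γ, hγ⟩ := h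
  refine ⟨⟨⟨fun θ => ⟨γ θ, hWs (hγ θ)⟩, (map_continuous γ).subtype_mk _⟩, ?_, ?_⟩, fun θ => hγ θ⟩
  · exact Subtype.ext (by simp)
  · exact Subtype.ext (by simp)

lemma homotopic_restrict {s W : Set E3} (hWs : W ⊆ s) [hsc : SimplyConnectedSpace ↥W]
    {a b : ↥s} (f g : Path a b) (hf : ∀ θ, (f θ : E3) ∈ W) (hg : ∀ θ, (g θ : E3) ∈ W) :
    f.Homotopic g := by
  have ha : (a : E3) ∈ W := by have := hf 0; rwa [f.source] at this
  have hb : (b : E3) ∈ W := by have := hf 1; rwa [f.target] at this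
  let f' : Path (⟨(a : E3), ha⟩ : ↥W) ⟨(b : E3), hb⟩ :=
    ⟨⟨fun θ => ⟨(f θ : E3), hf θ⟩, (continuous_subtype_val.comp (map_continuous f)).subtype_mk _⟩,
      Subtype.ext (show ((f 0 : ↥s) : E3) = ((a : ↥s) : E3) from congrArg Subtype.val f.source),
      Subtype.ext (show ((f 1 : ↥s) : E3) = ((b : ↥s) : E3) from congrArg Subtype.val f.target)⟩
  let g' : Path (⟨(a : E3), ha⟩ : ↥W) ⟨(b : E3), hb⟩ :=
    ⟨⟨fun θ => ⟨(g θ : E3), hg θ⟩, (continuous_subtype_val.comp (map_continuous g)).subtype_mk _⟩,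
      Subtype.ext (show ((g 0 : ↥s) : E3) = ((a : ↥s) : E3) from congrArg Subtype.val g.source),
      Subtype.ext (show ((g 1 : ↥s) : E3) = ((b : ↥s) : E3) from congrArg Subtype.val g.target)⟩
  have h' : f'.Homotopic g' := SimplyConnectedSpace.paths_homotopic f' g'
  let ι : C(↥W, ↥s) := ⟨fun u => ⟨(u : E3), hWs u.2⟩, continuous_subtype_val.subtype_mk _⟩
  have hmap := h'.map ι
  have ef : f'.map ι.continuous = f := by ext θ; rfl
  have eg : g'.map ι.continuous = g := by ext θ; rfl
  rw [ef, eg] at hmap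
  exact hmap

end VK

/-- An open ball in `ℝ³` minus a straight line segment starting at its center (the image
under the affine embedding `t ↦ p + t • v` of `[0,1]`) is simply connected. -/
theorem stmt_15 (p v : EuclideanSpace ℝ (Fin 3)) (hv : v ≠ 0) (r : ℝ) (hr : 0 < r) :
    SimplyConnectedSpace
      ↥(Metric.ball p r \ (fun t : ℝ => p + t • v) '' Set.Icc (0:ℝ) 1) := by
  classical
  by_cases hLr : r ≤ ‖v‖
  · rw [VK.ball_diff_seg_eq_setU hv hLr]
    haveI : ContractibleSpace ↥(VK.setU p v r) :=
      (VK.setU_starConvex hv hr).contractibleSpace ⟨_, VK.qpt_mem_setU hv hr⟩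
    infer_instance
  · push_neg at hLr
    rw [VK.ball_diff_seg_eq_union hv]
    obtain ⟨n, hn1, hnv⟩ := VK.exists_unit_orth hv
    have hx₀ := VK.xipt_mem_UV (p := p) hv hLr hn1 hnv
    set s : Set VK.E3 := VK.setU p v r ∪ VK.setV p v r with hs_def
    have hUs : VK.setU p v r ⊆ s := subset_union_left
    have hVs : VK.setV p v r ⊆ s := subset_union_right
    haveI : ContractibleSpace ↥(VK.setU p v r) :=
      (VK.setU_starConvex hv hr).contractibleSpace ⟨_, VK.qpt_mem_setU hv hr⟩
    haveI : ContractibleSpace ↥(VK.setV p v r) :=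
      (VK.setV_convex (p := p)).contractibleSpace ⟨_, hx₀.2⟩
    apply VK.vanKampen_simplyConnected
      (Subtype.val ⁻¹' VK.setU p v r) (Subtype.val ⁻¹' VK.setV p v r)
      ((VK.setU_open hv).preimage continuous_subtype_val)
      ((VK.setV_open (p := p) (v := v)).preimage continuous_subtype_val)
      ?_ ⟨VK.xipt p v r n, hUs hx₀.1⟩ hx₀.1 hx₀.2 ?_ ?_ ?_ ?_ ?_
    · -- union is everything
      apply eq_univ_of_forall
      intro z
      rcases z.2 with h | h
      · exact Or.inl h
      · exact Or.inr h
    · -- paths in U are homotopic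
      intro a b f g hf hg
      exact VK.homotopic_restrict hUs f g (fun θ => hf ⟨θ, rfl⟩) (fun θ => hg ⟨θ, rfl⟩)
    · -- paths in V are homotopic
      intro a b f g hf hg
      exact VK.homotopic_restrict hVs f g (fun θ => hf ⟨θ, rfl⟩) (fun θ => hg ⟨θ, rfl⟩)
    · -- joined in U
      intro z hz
      have hE : JoinedIn (VK.setU p v r) (VK.xipt p v r n) (z : VK.E3) :=
        ((VK.joinedIn_setU_of_star hv hr hx₀.1).symm.trans (VK.joinedIn_setU_of_star hv hr hz))
      exact VK.joinedIn_restrict hUs hE (hUs hx₀.1) z.2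
    · -- joined in V
      intro z hz
      have hE : JoinedIn (VK.setV p v r) (VK.xipt p v r n) (z : VK.E3) := by
        apply VK.joinedIn_segment
        intro θ h0 h1
        exact VK.setV_convex hx₀.2 hz (by linarith) h0 (by ring)
      exact VK.joinedIn_restrict hVs hE (hUs hx₀.1) z.2
    · -- joined in U ∩ V
      intro z hz
      have hzE : (z : VK.E3) ∈ VK.setU p v r ∩ VK.setV p v r := ⟨hz.1, hz.2⟩
      obtain ⟨u, hu1, huv, hJ1⟩ := VK.joinedIn_UV_to_xipt hv hLr hzE
      have hJ2 := VK.joinedIn_UV_xipt_xipt (p := p) hv hLr hu1 huv hn1 hnv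
      have hE : JoinedIn (VK.setU p v r ∩ VK.setV p v r) (VK.xipt p v r n) (z : VK.E3) :=
        (hJ1.trans hJ2).symm
      have := VK.joinedIn_restrict (Set.inter_subset_left.trans hUs) hE (hUs hx₀.1) z.2
      exact this.mono (fun x hx => ⟨hx.1, hx.2⟩)
end
end
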